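/- Suppose E is spectral and 𝔖(E) is sharply determining. Then the set S(E) of sharp elements of E, with the order induced from E and the orthocomplement f ↦ u − f, is an orthomodular lattice: (i) S(E) is a lattice with least element 0 and greatest element u; (ii) u − f ∈ S(E) for f ∈ S(E), u − (u − f) = f, and f ≤ g implies u − g ≤ u − f; (iii) f ∧ (u − f) = 0 for all f ∈ S(E); (iv) for f, g ∈ S(E) with f ≤ g one has g = f ∨ (g ∧ (u − f)), where ∨ and ∧ denote the lattice operations of S(E). -/

import Mathlib

variable {V : Type*} [AddCommGroup V] [Module ℝ V]

/-- `P` is a pointed convex cone: closed under addition, nonnegative scalar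
multiplication, and `P ∩ (-P) = {0}`. -/
def IsCone (P : Set V) : Prop :=
  (∀ x ∈ P, ∀ y ∈ P, x + y ∈ P) ∧
  (∀ c : ℝ, 0 ≤ c → ∀ x ∈ P, c • x ∈ P) ∧
  (∀ x ∈ P, -x ∈ P → x = 0)

/-- The order induced by the cone `P`: `v ≤ w` iff `w - v ∈ P`. -/
def leC (P : Set V) (v w : V) : Prop := w - v ∈ P

/-- The linear effect algebra `E = [0, u]`. -/
def Eff (P : Set V) (u : V) : Set V := {v | leC P 0 v ∧ leC P v u}

/-- `f` is a sharp element of `[0, u]`. -/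
def Sharp (P : Set V) (u f : V) : Prop :=
  f ∈ Eff P u ∧ ∀ g ∈ Eff P u, leC P g f → leC P g (u - f) → g = 0

/-- `f` is a one-dimensional element of `[0, u]`. -/
def OneDim (P : Set V) (u f : V) : Prop :=
  f ∈ Eff P u ∧ f ≠ 0 ∧ ∀ g ∈ Eff P u, leC P g f → ∃ t : ℝ, 0 ≤ t ∧ t ≤ 1 ∧ g = t • f

/-- The set of sharp one-dimensional elements of `[0, u]`. -/
def S1 (P : Set V) (u : V) : Set V := {f | Sharp P u f ∧ OneDim P u f}

/-- A context: a finite family of sharp one-dimensional elements summing to `u`. -/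
def IsContext (P : Set V) (u : V) {n : ℕ} (a : Fin n → V) : Prop :=
  (∀ i, a i ∈ S1 P u) ∧ ∑ i, a i = u

/-- The effect algebra `[0, u]` is spectral. -/
def Spectral (P : Set V) (u : V) : Prop :=
  ∀ f ∈ Eff P u, ∃ (n : ℕ) (a : Fin n → V) (μ : Fin n → ℝ),
    IsContext P u a ∧ (∀ i, 0 ≤ μ i ∧ μ i ≤ 1) ∧ f = ∑ i, μ i • a i

/-- A state on `[0, u]`: a positive linear functional with `s u = 1`. -/
def IsState (P : Set V) (u : V) (s : V →ₗ[ℝ] ℝ) : Prop :=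
  (∀ p ∈ P, 0 ≤ s p) ∧ s u = 1

/-- The state space is sharply determining: for every sharp `f` and every `g ∈ E`
with `¬(f ≤ g)` there is a state `s` with `s f = 1 > s g`. -/
def SharplyDet (P : Set V) (u : V) : Prop :=
  ∀ f ∈ Eff P u, Sharp P u f → ∀ g ∈ Eff P u, ¬ leC P f g →
    ∃ s : V →ₗ[ℝ] ℝ, IsState P u s ∧ s f = 1 ∧ s g < 1

/-- `p` is the supremum of `x` and `y` in the poset of sharp elements. -/
def IsSupS (P : Set V) (u x y p : V) : Prop :=
  Sharp P u p ∧ leC P x p ∧ leC P y p ∧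
    ∀ q, Sharp P u q → leC P x q → leC P y q → leC P p q

/-- `q` is the infimum of `x` and `y` in the poset of sharp elements. -/
def IsInfS (P : Set V) (u x y q : V) : Prop :=
  Sharp P u q ∧ leC P q x ∧ leC P q y ∧
    ∀ r, Sharp P u r → leC P r x → leC P r y → leC P r q


section AuxSharp

variable {P : Set V} {u : V}

private lemma memP_of_eff {v : V} (hv : v ∈ Eff P u) : v ∈ P := by
  have h := hv.1
  simpa [leC] using h

private lemma eff_mk {v : V} (h1 : v ∈ P) (h2 : u - v ∈ P) : v ∈ Eff P u :=
  ⟨by simpa [leC] using h1, h2⟩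

private lemma zero_memP (hP : IsCone P) (hu : u ∈ P) : (0 : V) ∈ P := by
  have h := hP.2.1 0 le_rfl u hu
  simpa using h

private lemma leC_trans (hP : IsCone P) {a b c : V} (h1 : leC P a b) (h2 : leC P b c) :
    leC P a c := by
  have e : c - a = (c - b) + (b - a) := by abel
  show c - a ∈ P
  rw [e]
  exact hP.1 _ h2 _ h1

private lemma sum_memP (hP : IsCone P) (hu : u ∈ P) {ι : Type*} (A : Finset ι)
    (x : ι → V) (hx : ∀ i ∈ A, x i ∈ P) : (∑ i ∈ A, x i) ∈ P := by
  classical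
  induction A using Finset.induction_on with
  | empty => simpa using zero_memP hP hu
  | insert _ _ hnot ih =>
    rw [Finset.sum_insert hnot]
    exact hP.1 _ (hx _ (Finset.mem_insert_self _ _))
      _ (ih fun i hi => hx i (Finset.mem_insert_of_mem hi))

private lemma state_mono {s : V →ₗ[ℝ] ℝ} (hs : IsState P u s) {a b : V} (h : leC P a b) :
    s a ≤ s b := by
  have h1 := hs.1 _ h
  rw [map_sub] at h1
  linarith

private lemma state_le_one {s : V →ₗ[ℝ] ℝ} (hs : IsState P u s) {a : V} (h : leC P a u) :
    s a ≤ 1 := by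
  have h1 := state_mono hs h
  rw [hs.2] at h1
  exact h1

private lemma u_mem_eff (hP : IsCone P) (hu : u ∈ P) : u ∈ Eff P u :=
  eff_mk hu (by simpa using zero_memP hP hu)

private lemma sharp_zero (hP : IsCone P) (hu : u ∈ P) : Sharp P u 0 := by
  refine ⟨eff_mk (zero_memP hP hu) (by simpa using hu), ?_⟩
  intro g hg h1 _
  have hgP : g ∈ P := memP_of_eff hg
  have hng : -g ∈ P := by simpa [leC] using h1
  exact hP.2.2 g hgP hng

private lemma sharp_u (hP : IsCone P) (hu : u ∈ P) : Sharp P u u := by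
  refine ⟨u_mem_eff hP hu, ?_⟩
  intro g hg _ h2
  have hgP : g ∈ P := memP_of_eff hg
  have hng : -g ∈ P := by simpa [leC] using h2
  exact hP.2.2 g hgP hng

private lemma sharp_compl {f : V} (hf : Sharp P u f) : Sharp P u (u - f) := by
  obtain ⟨⟨h0, h1⟩, hsh⟩ := hf
  refine ⟨⟨by simpa [leC] using h1, by simpa [leC] using h0⟩, ?_⟩
  intro g hg hg1 hg2
  rw [sub_sub_cancel] at hg2
  exact hsh g hg hg2 hg1

/-- Lemma R: for sharp `w` and `x ∈ E`, if every state with `s w = 1` has `s x = 1`,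
then `w ≤ x`. -/
private lemma lemR (hsd : SharplyDet P u) {w x : V} (hw : Sharp P u w) (hx : x ∈ Eff P u)
    (h : ∀ s : V →ₗ[ℝ] ℝ, IsState P u s → s w = 1 → s x = 1) : leC P w x := by
  by_contra hc
  obtain ⟨s, hs, hw1, hx1⟩ := hsd w hw.1 hw x hx hc
  have := h s hs hw1
  linarith

/-- Lemma Q: for sharp `w` and `x ∈ E`, if every state with `s w = 0` has `s x = 0`,
then `x ≤ w`. -/
private lemma lemQ (hsd : SharplyDet P u) {w x : V} (hw : Sharp P u w) (hx : x ∈ Eff P u)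
    (h : ∀ s : V →ₗ[ℝ] ℝ, IsState P u s → s w = 0 → s x = 0) : leC P x w := by
  have hx' : (u - x) ∈ Eff P u := eff_mk hx.2 (by simpa [leC] using hx.1)
  have h2 : leC P (u - w) (u - x) := by
    refine lemR hsd (sharp_compl hw) hx' ?_
    intro s hs h1
    rw [map_sub, hs.2] at h1 ⊢
    have hw0 : s w = 0 := by linarith
    have := h s hs hw0
    linarith
  have e : (u - x) - (u - w) = w - x := by abel
  show w - x ∈ P
  rw [← e]
  exact h2

/-- Lemma H: if `t • b ≤ y` with `t > 0`, `b ∈ E` and `y` sharp, then `b ≤ y`. -/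
private lemma lemH (hsd : SharplyDet P u) {b y : V} (hb : b ∈ Eff P u) (hy : Sharp P u y)
    {t : ℝ} (ht : 0 < t) (h : leC P (t • b) y) : leC P b y := by
  refine lemQ hsd hy hb ?_
  intro s hs h0
  have h1 : s (t • b) ≤ s y := state_mono hs h
  rw [map_smul, smul_eq_mul, h0] at h1
  have h2 : 0 ≤ s b := hs.1 b (memP_of_eff hb)
  nlinarith

/-- Subsums of a context are sharp. -/
private lemma sharp_sum (hP : IsCone P) (hu : u ∈ P) (hspec : Spectral P u)
    (hsd : SharplyDet P u) {n : ℕ} {c : Fin n → V} (hc : IsContext P u c)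
    (A : Finset (Fin n)) : Sharp P u (∑ i ∈ A, c i) := by
  classical
  have hciE : ∀ i, c i ∈ Eff P u := fun i => (hc.1 i).1.1
  have hciP : ∀ i, c i ∈ P := fun i => memP_of_eff (hciE i)
  set q : V := ∑ i ∈ A, c i with hqdef
  have hqP : q ∈ P := sum_memP hP hu A c fun i _ => hciP i
  have hcompl : u - q = ∑ i ∈ Aᶜ, c i := by
    rw [← hc.2, ← Finset.sum_add_sum_compl A c]
    abel
  have hqE : q ∈ Eff P u := eff_mk hqP (by
    rw [hcompl]; exact sum_memP hP hu _ c fun i _ => hciP i)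
  refine ⟨hqE, ?_⟩
  intro g hg hgq hgq'
  -- g is below the complement of every element of the context
  have hgci : ∀ i, leC P g (u - c i) := by
    intro i
    by_cases hiA : i ∈ A
    · have h1 : q - c i = ∑ j ∈ A.erase i, c j := by
        rw [hqdef, ← Finset.add_sum_erase A c hiA]
        abel
      have e : (u - c i) - g = ((u - q) - g) + (q - c i) := by abel
      show (u - c i) - g ∈ P
      rw [e]
      exact hP.1 _ hgq' _ (by rw [h1]; exact sum_memP hP hu _ c fun j _ => hciP j)
    · have hiA' : i ∈ Aᶜ := Finset.mem_compl.mpr hiA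
      have h1 : (u - q) - c i = ∑ j ∈ Aᶜ.erase i, c j := by
        rw [hcompl, ← Finset.add_sum_erase Aᶜ c hiA']
        abel
      have e : (u - c i) - g = (q - g) + ((u - q) - c i) := by abel
      show (u - c i) - g ∈ P
      rw [e]
      exact hP.1 _ hgq _ (by rw [h1]; exact sum_memP hP hu _ c fun j _ => hciP j)
  obtain ⟨m, b, ν, hbc, hν, hgdec⟩ := hspec g hg
  have key : ∀ j, ν j • b j = 0 := by
    intro j
    rcases eq_or_lt_of_le (hν j).1 with h0 | hpos
    · rw [← h0, zero_smul]
    · exfalso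
      have hbjE : b j ∈ Eff P u := (hbc.1 j).1.1
      have hνb_le_g : leC P (ν j • b j) g := by
        have e : g - ν j • b j = ∑ k ∈ Finset.univ.erase j, ν k • b k := by
          rw [hgdec, ← Finset.add_sum_erase Finset.univ (fun k => ν k • b k)
            (Finset.mem_univ j)]
          abel
        show g - ν j • b j ∈ P
        rw [e]
        exact sum_memP hP hu _ _ fun k _ => hP.2.1 _ (hν k).1 _ (memP_of_eff ((hbc.1 k).1.1))
      have hbci : ∀ i, leC P (b j) (u - c i) := by
        intro i
        exact lemH hsd hbjE (sharp_compl (hc.1 i).1) hpos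
          (leC_trans hP hνb_le_g (hgci i))
      have hule : leC P u (u - b j) := by
        refine lemQ hsd (sharp_compl (hbc.1 j).1) (u_mem_eff hP hu) ?_
        intro s hs h0
        rw [map_sub, hs.2] at h0
        have hbj1 : s (b j) = 1 := by linarith
        have hci0 : ∀ i, s (c i) = 0 := by
          intro i
          have h1 := state_mono hs (hbci i)
          rw [map_sub, hs.2, hbj1] at h1
          have h2 := hs.1 _ (hciP i)
          linarith
        rw [← hc.2, map_sum]
        exact Finset.sum_eq_zero fun i _ => hci0 i
      have hnb : -(b j) ∈ P := by
        have e : (u - b j) - u = -(b j) := by abel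
        rw [← e]
        exact hule
      have hbj0 : b j = 0 := hP.2.2 _ (memP_of_eff hbjE) hnb
      exact (hbc.1 j).2.2.1 hbj0
  rw [hgdec]
  exact Finset.sum_eq_zero fun j _ => key j

private lemma exists_sup (hP : IsCone P) (hu : u ∈ P) (hspec : Spectral P u)
    (hsd : SharplyDet P u) {f g : V} (hf : Sharp P u f) (hg : Sharp P u g) :
    ∃ p, IsSupS P u f g p := by
  classical
  have hfP : f ∈ P := memP_of_eff hf.1
  have hgP : g ∈ P := memP_of_eff hg.1
  set h0 : V := (2⁻¹ : ℝ) • (f + g) with hdef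
  have hh : h0 ∈ Eff P u := by
    refine eff_mk (hP.2.1 _ (by norm_num) _ (hP.1 _ hfP _ hgP)) ?_
    have e : u - h0 = (2⁻¹ : ℝ) • ((u - f) + (u - g)) := by
      rw [hdef]; module
    rw [e]
    exact hP.2.1 _ (by norm_num) _ (hP.1 _ hf.1.2 _ hg.1.2)
  obtain ⟨m, c, μ, hctx, hμ, hdec⟩ := hspec h0 hh
  have hciP : ∀ i, c i ∈ P := fun i => memP_of_eff (hctx.1 i).1.1
  set Apos : Finset (Fin m) := Finset.univ.filter (fun i => 0 < μ i) with hApos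
  set p₀ : V := ∑ i ∈ Apos, c i with hp₀
  have hp₀sharp : Sharp P u p₀ := sharp_sum hP hu hspec hsd hctx Apos
  -- common state facts
  have hstate : ∀ s : V →ₗ[ℝ] ℝ, IsState P u s →
      (∑ i, s (c i) = 1) ∧ (s h0 = ∑ i, μ i * s (c i)) ∧ (s f + s g = 2 * s h0) := by
    intro s hs
    refine ⟨?_, ?_, ?_⟩
    · rw [← map_sum, hctx.2, hs.2]
    · rw [hdec, map_sum]
      exact Finset.sum_congr rfl fun i _ => by rw [map_smul, smul_eq_mul]
    · rw [hdef, map_smul, map_add, smul_eq_mul]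
      ring
  refine ⟨p₀, hp₀sharp, ?_, ?_, ?_⟩
  · -- f ≤ p₀
    refine lemQ hsd hp₀sharp hf.1 ?_
    intro s hs hsp0
    obtain ⟨hsum1, hsh, hsfg⟩ := hstate s hs
    have hterm : ∀ i ∈ Apos, s (c i) = 0 := by
      have hsum : ∑ i ∈ Apos, s (c i) = 0 := by
        rw [← map_sum]
        exact hsp0
      exact fun i hi =>
        (Finset.sum_eq_zero_iff_of_nonneg fun i _ => hs.1 _ (hciP i)).1 hsum i hi
    have hsh0 : s h0 = 0 := by
      rw [hsh]
      refine Finset.sum_eq_zero fun i _ => ?_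
      by_cases hi : i ∈ Apos
      · rw [hterm i hi, mul_zero]
      · have : μ i = 0 := le_antisymm (not_lt.mp (by simpa [hApos] using hi)) ((hμ i).1)
        rw [this, zero_mul]
    have h1 : 0 ≤ s f := hs.1 f hfP
    have h2 : 0 ≤ s g := hs.1 g hgP
    linarith
  · -- g ≤ p₀
    refine lemQ hsd hp₀sharp hg.1 ?_
    intro s hs hsp0
    obtain ⟨hsum1, hsh, hsfg⟩ := hstate s hs
    have hterm : ∀ i ∈ Apos, s (c i) = 0 := by
      have hsum : ∑ i ∈ Apos, s (c i) = 0 := by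
        rw [← map_sum]
        exact hsp0
      exact fun i hi =>
        (Finset.sum_eq_zero_iff_of_nonneg fun i _ => hs.1 _ (hciP i)).1 hsum i hi
    have hsh0 : s h0 = 0 := by
      rw [hsh]
      refine Finset.sum_eq_zero fun i _ => ?_
      by_cases hi : i ∈ Apos
      · rw [hterm i hi, mul_zero]
      · have : μ i = 0 := le_antisymm (not_lt.mp (by simpa [hApos] using hi)) ((hμ i).1)
        rw [this, zero_mul]
    have h1 : 0 ≤ s f := hs.1 f hfP
    have h2 : 0 ≤ s g := hs.1 g hgP
    linarith
  · -- maximality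
    intro r hr hfr hgr
    refine lemQ hsd hr hp₀sharp.1 ?_
    intro s hs hsr0
    obtain ⟨hsum1, hsh, hsfg⟩ := hstate s hs
    have hsf : s f = 0 := le_antisymm (by have := state_mono hs hfr; linarith) (hs.1 f hfP)
    have hsg : s g = 0 := le_antisymm (by have := state_mono hs hgr; linarith) (hs.1 g hgP)
    have hsh0 : ∑ i, μ i * s (c i) = 0 := by
      rw [← hsh]; linarith
    have hterm : ∀ i, μ i * s (c i) = 0 :=
      fun i => (Finset.sum_eq_zero_iff_of_nonneg fun i _ =>
        mul_nonneg (hμ i).1 (hs.1 _ (hciP i))).1 hsh0 i (Finset.mem_univ i)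
    rw [hp₀, map_sum]
    refine Finset.sum_eq_zero fun i hi => ?_
    have hpos : 0 < μ i := by simpa [hApos] using hi
    have := hterm i
    rcases mul_eq_zero.mp this with h | h
    · exact absurd h (ne_of_gt hpos)
    · exact h

private lemma exists_inf (hP : IsCone P) (hu : u ∈ P) (hspec : Spectral P u)
    (hsd : SharplyDet P u) {f g : V} (hf : Sharp P u f) (hg : Sharp P u g) :
    ∃ q, IsInfS P u f g q := by
  classical
  have hfP : f ∈ P := memP_of_eff hf.1
  have hgP : g ∈ P := memP_of_eff hg.1
  set h0 : V := (2⁻¹ : ℝ) • (f + g) with hdef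
  have hh : h0 ∈ Eff P u := by
    refine eff_mk (hP.2.1 _ (by norm_num) _ (hP.1 _ hfP _ hgP)) ?_
    have e : u - h0 = (2⁻¹ : ℝ) • ((u - f) + (u - g)) := by
      rw [hdef]; module
    rw [e]
    exact hP.2.1 _ (by norm_num) _ (hP.1 _ hf.1.2 _ hg.1.2)
  obtain ⟨m, c, μ, hctx, hμ, hdec⟩ := hspec h0 hh
  have hciP : ∀ i, c i ∈ P := fun i => memP_of_eff (hctx.1 i).1.1
  set A1 : Finset (Fin m) := Finset.univ.filter (fun i => μ i = 1) with hA1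
  set q₀ : V := ∑ i ∈ A1, c i with hq₀
  have hq₀sharp : Sharp P u q₀ := sharp_sum hP hu hspec hsd hctx A1
  have hstate : ∀ s : V →ₗ[ℝ] ℝ, IsState P u s →
      (∑ i, s (c i) = 1) ∧ (s h0 = ∑ i, μ i * s (c i)) ∧ (s f + s g = 2 * s h0) := by
    intro s hs
    refine ⟨?_, ?_, ?_⟩
    · rw [← map_sum, hctx.2, hs.2]
    · rw [hdec, map_sum]
      exact Finset.sum_congr rfl fun i _ => by rw [map_smul, smul_eq_mul]
    · rw [hdef, map_smul, map_add, smul_eq_mul]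
      ring
  have hhq : h0 - q₀ ∈ P := by
    have e1 : ∑ i ∈ A1, μ i • c i = ∑ i ∈ A1, c i :=
      Finset.sum_congr rfl fun i hi => by
        rw [show μ i = 1 by simpa [hA1] using hi, one_smul]
    have e2 : h0 - q₀ = ∑ i ∈ A1ᶜ, μ i • c i := by
      rw [hq₀, hdec, ← Finset.sum_add_sum_compl A1 (fun i => μ i • c i), e1]
      abel
    rw [e2]
    exact sum_memP hP hu _ _ fun i _ => hP.2.1 _ (hμ i).1 _ (hciP i)
  have hq₀f : ∀ s : V →ₗ[ℝ] ℝ, IsState P u s → s q₀ = 1 → s f = 1 ∧ s g = 1 := by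
    intro s hs hsq1
    obtain ⟨hsum1, hsh, hsfg⟩ := hstate s hs
    have h1 : s q₀ ≤ s h0 := by
      have := hs.1 _ hhq
      rw [map_sub] at this
      linarith
    have h2 : s h0 ≤ 1 := state_le_one hs hh.2
    have h3 : s h0 = 1 := by rw [hsq1] at h1; linarith
    have h4 : s f ≤ 1 := state_le_one hs hf.1.2
    have h5 : s g ≤ 1 := state_le_one hs hg.1.2
    constructor <;> linarith
  refine ⟨q₀, hq₀sharp, ?_, ?_, ?_⟩
  · exact lemR hsd hq₀sharp hf.1 fun s hs h1 => (hq₀f s hs h1).1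
  · exact lemR hsd hq₀sharp hg.1 fun s hs h1 => (hq₀f s hs h1).2
  · intro r hr hrf hrg
    refine lemR hsd hr hq₀sharp.1 ?_
    intro s hs hsr1
    obtain ⟨hsum1, hsh, hsfg⟩ := hstate s hs
    have h4 : s f ≤ 1 := state_le_one hs hf.1.2
    have h5 : s g ≤ 1 := state_le_one hs hg.1.2
    have hsf : s f = 1 := by
      have := state_mono hs hrf
      rw [hsr1] at this
      linarith
    have hsg : s g = 1 := by
      have := state_mono hs hrg
      rw [hsr1] at this
      linarith
    have hsh1 : s h0 = 1 := by linarith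
    have hsum0 : ∑ i, (1 - μ i) * s (c i) = 0 := by
      have e : ∑ i, (1 - μ i) * s (c i) = (∑ i, s (c i)) - ∑ i, μ i * s (c i) := by
        rw [← Finset.sum_sub_distrib]
        exact Finset.sum_congr rfl fun i _ => by ring
      rw [e, hsum1, ← hsh, hsh1]
      ring
    have hterm : ∀ i, (1 - μ i) * s (c i) = 0 :=
      fun i => (Finset.sum_eq_zero_iff_of_nonneg fun i _ =>
        mul_nonneg (by linarith [(hμ i).2]) (hs.1 _ (hciP i))).1 hsum0 i (Finset.mem_univ i)
    have hz : ∀ i ∈ Finset.univ, i ∉ A1 → s (c i) = 0 := by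
      intro i _ hi
      have hne : μ i ≠ 1 := by simpa [hA1] using hi
      rcases mul_eq_zero.mp (hterm i) with h | h
      · exact absurd (by linarith [sub_eq_zero.mp h] : μ i = 1) hne
      · exact h
    have : s q₀ = ∑ i, s (c i) := by
      rw [hq₀, map_sum]
      exact Finset.sum_subset (Finset.subset_univ A1) hz
    rw [this, hsum1]

end AuxSharp

/-- In a spectral effect algebra with sharply determining state space, the set of
sharp elements with the induced order and orthocomplement `f ↦ u - f` is an
orthomodular lattice. -/
theorem stmt_18 (P : Set V) (hP : IsCone P) (u : V) (hu : u ∈ P)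
    (hspec : Spectral P u) (hsd : SharplyDet P u) :
    -- (i) `S(E)` is a lattice with least element `0` and greatest element `u`
    ((∀ f g, Sharp P u f → Sharp P u g →
        (∃ p, IsSupS P u f g p) ∧ (∃ q, IsInfS P u f g q)) ∧
      Sharp P u 0 ∧ Sharp P u u ∧
      (∀ f, Sharp P u f → leC P 0 f ∧ leC P f u)) ∧
    -- (ii) the orthocomplement `f ↦ u - f`
    ((∀ f, Sharp P u f → Sharp P u (u - f)) ∧
      (∀ f : V, u - (u - f) = f) ∧
      (∀ f g, Sharp P u f → Sharp P u g → leC P f g → leC P (u - g) (u - f))) ∧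
    -- (iii) `f ∧ (u - f) = 0`
    (∀ f, Sharp P u f → ∀ q, IsInfS P u f (u - f) q → q = 0) ∧
    -- (iv) orthomodularity: `f ≤ g → g = f ∨ (g ∧ (u - f))`
    (∀ f g, Sharp P u f → Sharp P u g → leC P f g →
      ∀ q, IsInfS P u g (u - f) q → ∀ p, IsSupS P u f q p → p = g) := by
  classical
  refine ⟨⟨?_, sharp_zero hP hu, sharp_u hP hu, ?_⟩, ⟨?_, ?_, ?_⟩, ?_, ?_⟩
  · -- (i) lattice
    intro f g hf hg
    exact ⟨exists_sup hP hu hspec hsd hf hg, exists_inf hP hu hspec hsd hf hg⟩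
  · -- bounds
    intro f hf
    exact hf.1
  · -- (ii) complement sharp
    intro f hf
    exact sharp_compl hf
  · -- involution
    intro f
    exact sub_sub_cancel u f
  · -- antitone
    intro f g _ _ hfg
    show (u - f) - (u - g) ∈ P
    have e : (u - f) - (u - g) = g - f := by abel
    rw [e]
    exact hfg
  · -- (iii)
    intro f hf q hq
    exact hf.2 q hq.1.1 hq.2.1 hq.2.2.1
  · -- (iv) orthomodularity
    intro f g hf hg hfg q hq p hp
    -- p ≤ g
    have hpg : leC P p g := hp.2.2.2 g hg hfg hq.2.1
    -- d = g - f
    set d : V := g - f with hd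
    have hdE : d ∈ Eff P u := by
      refine eff_mk hfg ?_
      have e : u - d = (u - g) + f := by rw [hd]; abel
      rw [e]
      exact hP.1 _ hg.1.2 _ (memP_of_eff hf.1)
    have hdg : leC P d g := by
      show g - d ∈ P
      have e : g - d = f := by rw [hd]; abel
      rw [e]
      exact memP_of_eff hf.1
    have hduf : leC P d (u - f) := by
      show (u - f) - d ∈ P
      have e : (u - f) - d = u - g := by rw [hd]; abel
      rw [e]
      exact hg.1.2
    obtain ⟨m, b, ν, hbc, hν, hdec⟩ := hspec d hdE
    have hbiP : ∀ j, b j ∈ P := fun j => memP_of_eff (hbc.1 j).1.1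
    set Bpos : Finset (Fin m) := Finset.univ.filter (fun j => 0 < ν j) with hBpos
    set w : V := ∑ j ∈ Bpos, b j with hw
    have hwE : w ∈ Eff P u := (sharp_sum hP hu hspec hsd hbc Bpos).1
    -- d written as sum over Bpos
    have hdsum : d = ∑ j ∈ Bpos, ν j • b j := by
      rw [hdec, ← Finset.sum_add_sum_compl Bpos (fun j => ν j • b j)]
      have e0 : ∑ j ∈ Bposᶜ, ν j • b j = 0 := by
        refine Finset.sum_eq_zero fun j hj => ?_
        have hj' : ¬ 0 < ν j := by
          have := Finset.mem_compl.mp hj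
          simpa [hBpos] using this
        have : ν j = 0 := le_antisymm (not_lt.mp hj') (hν j).1
        rw [this, zero_smul]
      rw [e0, add_zero]
    have hdw : leC P d w := by
      show w - d ∈ P
      have e : w - d = ∑ j ∈ Bpos, (1 - ν j) • b j := by
        rw [hw, hdsum, ← Finset.sum_sub_distrib]
        exact Finset.sum_congr rfl fun j _ => by rw [sub_smul, one_smul]
      rw [e]
      exact sum_memP hP hu _ _ fun j _ => hP.2.1 _ (by linarith [(hν j).2]) _ (hbiP j)
    -- each b j with j ∈ Bpos is below q
    have hbq : ∀ j ∈ Bpos, leC P (b j) q := by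
      intro j hj
      have hpos : 0 < ν j := by simpa [hBpos] using hj
      have hνb_le_d : leC P (ν j • b j) d := by
        show d - ν j • b j ∈ P
        have e : d - ν j • b j = ∑ k ∈ Finset.univ.erase j, ν k • b k := by
          rw [hdec, ← Finset.add_sum_erase Finset.univ (fun k => ν k • b k)
            (Finset.mem_univ j)]
          abel
        rw [e]
        exact sum_memP hP hu _ _ fun k _ => hP.2.1 _ (hν k).1 _ (hbiP k)
      have hbjg : leC P (b j) g :=
        lemH hsd (hbc.1 j).1.1 hg hpos (leC_trans hP hνb_le_d hdg)
      have hbjuf : leC P (b j) (u - f) :=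
        lemH hsd (hbc.1 j).1.1 (sharp_compl hf) hpos (leC_trans hP hνb_le_d hduf)
      exact hq.2.2.2 (b j) (hbc.1 j).1 hbjg hbjuf
    -- w ≤ q
    have hwq : leC P w q := by
      refine lemQ hsd hq.1 hwE ?_
      intro s hs hsq0
      rw [hw, map_sum]
      refine Finset.sum_eq_zero fun j hj => ?_
      have h1 := state_mono hs (hbq j hj)
      have h2 := hs.1 _ (hbiP j)
      rw [hsq0] at h1
      linarith
    have hdq : leC P d q := leC_trans hP hdw hwq
    -- f + q ≤ p
    have hfqE : f + q ∈ Eff P u := by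
      refine eff_mk (hP.1 _ (memP_of_eff hf.1) _ (memP_of_eff hq.1.1)) ?_
      have e : u - (f + q) = (u - f) - q := by abel
      rw [e]
      exact hq.2.2.1
    have hfqp : leC P (f + q) p := by
      refine lemQ hsd hp.1 hfqE ?_
      intro s hs hsp0
      have h1 := state_mono hs hp.2.1
      have h2 := state_mono hs hp.2.2.1
      have h3 := hs.1 _ (memP_of_eff hf.1)
      have h4 := hs.1 _ (memP_of_eff hq.1.1)
      rw [hsp0] at h1 h2
      rw [map_add]
      linarith
    -- g ≤ p
    have hgp : leC P g p := by
      have hgfq : leC P g (f + q) := by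
        show (f + q) - g ∈ P
        have e : (f + q) - g = q - d := by rw [hd]; abel
        rw [e]
        exact hdq
      exact leC_trans hP hgfq hfqp
    -- antisymmetry
    have h1 : g - p ∈ P := hpg
    have h2 : p - g ∈ P := hgp
    have h3 : -(g - p) ∈ P := by
      have e : -(g - p) = p - g := by abel
      rw [e]; exact h2
    exact (sub_eq_zero.mp (hP.2.2 _ h1 h3)).symm
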